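/- Let Z_1, …, Z_N be i.i.d. observations from a probability measure μ on ℝ^d, independent of a random measurable function f_N: ℝ^d → ℝ. Suppose f_N → f in L²(μ) in probability for some f ∈ L²(μ), and suppose for every η > 0 there exist L < ∞ and a deterministic envelope G with G² ∈ L¹(μ) such that P(|f_N| ≤ L·G pointwise) ≥ 1 − η for all large N. Then N^{-1} Σ_{i=1}^N f_N(Z_i) − ∫ f_N dμ → 0 in probability and N^{-1} Σ_{i=1}^N f_N(Z_i)² − ∫ f_N² dμ → 0 in probability as N → ∞. -/

import Mathlib

open MeasureTheory ProbabilityTheory Filter ENNReal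

section Aux

variable {E : Type*} [MeasurableSpace E] {Ω₁ Ω₂ : Type} [MeasurableSpace Ω₁] [MeasurableSpace Ω₂]

/-- Quantitative slice bound: uniform over measurable `g` dominated a.e. by `H`. -/
lemma slice_bound (μ : Measure E) [IsProbabilityMeasure μ]
    (P₂ : Measure Ω₂) [IsProbabilityMeasure P₂]
    (Z : ℕ → Ω₂ → E) (hZm : ∀ i, Measurable (Z i))
    (hZind : iIndepFun Z P₂)
    (hZlaw : ∀ i, P₂.map (Z i) = μ)
    {H : E → ℝ} (hHm : Measurable H) (hH0 : ∀ x, 0 ≤ H x) (hHint : Integrable H μ)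
    {K ε : ℝ} (hK : 0 ≤ K) (hε : 0 < ε)
    (hrsmall : ∫ x, max (H x - K) 0 ∂μ ≤ ε / 3)
    {g : E → ℝ} (hgm : Measurable g) (hg : ∀ᵐ x ∂μ, |g x| ≤ H x)
    {N : ℕ} (hN : 0 < N) :
    P₂ {ω₂ | ε < |(N : ℝ)⁻¹ * ∑ i ∈ Finset.range N, g (Z i ω₂) - ∫ x, g x ∂μ|}
      ≤ ENNReal.ofReal (9 * K ^ 2 / (N * ε ^ 2))
        + ENNReal.ofReal ((3 / ε) * ∫ x, max (H x - K) 0 ∂μ) := by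
  have hNpos : (0:ℝ) < N := by exact_mod_cast hN
  set gK : E → ℝ := fun x => max (min (g x) K) (-K) with hgKdef
  set r : E → ℝ := fun x => max (H x - K) 0 with hrdef
  have hgKm : Measurable gK := (hgm.min measurable_const).max measurable_const
  have hrm : Measurable r := (hHm.sub measurable_const).max measurable_const
  have hr0 : ∀ x, 0 ≤ r x := fun x => le_max_right _ _
  have hrH : ∀ x, r x ≤ H x := fun x => max_le (by linarith [hH0 x]) (hH0 x)
  have hgKbdd : ∀ x, |gK x| ≤ K := by
    intro x
    rw [abs_le]
    exact ⟨le_max_right _ _, max_le (min_le_right _ _) (neg_le_self hK)⟩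
  have hdiff : ∀ x, |g x| ≤ H x → |g x - gK x| ≤ r x := by
    intro x hx
    simp only [hgKdef, hrdef]
    rcases le_or_gt (g x) K with h1 | h1
    · rcases le_or_gt (-K) (g x) with h2 | h2
      · rw [min_eq_left h1, max_eq_left h2, sub_self, abs_zero]
        exact le_max_right _ _
      · rw [min_eq_left h1, max_eq_right h2.le]
        have habs : |g x| = -g x := abs_of_nonpos (by linarith)
        have : |g x - -K| = -g x - K := by
          rw [abs_of_nonpos (by linarith)]; ring
        rw [this]
        exact le_max_of_le_left (by rw [habs] at hx; linarith)
    · rw [min_eq_right h1.le, max_eq_left (neg_le_self hK)]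
      have habs : |g x| = g x := abs_of_nonneg (by linarith)
      have : |g x - K| = g x - K := abs_of_nonneg (by linarith)
      rw [this]
      exact le_max_of_le_left (by rw [habs] at hx; linarith)
  -- integrability on `μ`
  have hIg : Integrable g μ :=
    hHint.mono' hgm.aestronglyMeasurable (hg.mono fun x hx => by rwa [Real.norm_eq_abs])
  have hIgK : Integrable gK μ :=
    (integrable_const K).mono' hgKm.aestronglyMeasurable
      (ae_of_all _ fun x => by rw [Real.norm_eq_abs]; exact hgKbdd x)
  have hIr : Integrable r μ :=
    hHint.mono' hrm.aestronglyMeasurable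
      (ae_of_all _ fun x => by rw [Real.norm_eq_abs, abs_of_nonneg (hr0 x)]; exact hrH x)
  have hint_diff : |(∫ x, g x ∂μ) - ∫ x, gK x ∂μ| ≤ ∫ x, r x ∂μ := by
    rw [← integral_sub hIg hIgK]
    calc |∫ x, (g x - gK x) ∂μ| ≤ ∫ x, |g x - gK x| ∂μ := by
          simpa [Real.norm_eq_abs] using
            norm_integral_le_integral_norm (fun x => g x - gK x) (μ := μ)
      _ ≤ ∫ x, r x ∂μ :=
          integral_mono_ae (hIg.sub hIgK).abs hIr (hg.mono fun x hx => hdiff x hx)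
  -- random variables
  set X : ℕ → Ω₂ → ℝ := fun i ω₂ => gK (Z i ω₂) with hXdef
  set S : Ω₂ → ℝ := ∑ i ∈ Finset.range N, X i with hSdef
  have hSapp : ∀ ω₂, S ω₂ = ∑ i ∈ Finset.range N, gK (Z i ω₂) := fun ω₂ =>
    Finset.sum_apply ω₂ _ _
  have hX2 : ∀ i, MemLp (X i) 2 P₂ := fun i =>
    MemLp.of_bound ((hgKm.comp (hZm i)).aestronglyMeasurable) K
      (ae_of_all _ fun ω₂ => by rw [Real.norm_eq_abs]; exact hgKbdd _)
  have hS2 : MemLp S 2 P₂ := memLp_finset_sum' _ (fun i _ => hX2 i)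
  have hEX : ∀ i, ∫ ω₂, X i ω₂ ∂P₂ = ∫ x, gK x ∂μ := by
    intro i
    rw [hXdef]
    simp only []
    rw [← hZlaw i]
    exact (integral_map (hZm i).aemeasurable hgKm.aestronglyMeasurable).symm
  have hES : ∫ ω₂, S ω₂ ∂P₂ = N * ∫ x, gK x ∂μ := by
    rw [hSdef]
    rw [show (∫ ω₂, (∑ i ∈ Finset.range N, X i) ω₂ ∂P₂)
        = ∫ ω₂, ∑ i ∈ Finset.range N, X i ω₂ ∂P₂ by
      congr 1; ext ω₂; exact Finset.sum_apply ω₂ _ _]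
    rw [integral_finset_sum _ (fun i _ => (hX2 i).integrable one_le_two)]
    simp only [hEX, Finset.sum_const, Finset.card_range, nsmul_eq_mul]
  -- variance bound
  have hvarX : ∀ i, variance (X i) P₂ ≤ K ^ 2 := by
    intro i
    refine (variance_le_expectation_sq (hX2 i).aestronglyMeasurable).trans ?_
    have h1 : (∫ ω₂, (X i ^ 2) ω₂ ∂P₂) = ∫ ω₂, (gK (Z i ω₂)) ^ 2 ∂P₂ := by
      congr 1
    rw [h1]
    have h2 : (∫ ω₂, (gK (Z i ω₂)) ^ 2 ∂P₂) = ∫ x, gK x ^ 2 ∂μ := by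
      rw [← hZlaw i]
      exact (integral_map (hZm i).aemeasurable
        (hgKm.pow_const 2).aestronglyMeasurable).symm
    rw [h2]
    calc (∫ x, gK x ^ 2 ∂μ) ≤ ∫ x, K ^ 2 ∂μ := by
          refine integral_mono ?_ (integrable_const _) ?_
          · exact (integrable_const (K ^ 2)).mono' (hgKm.pow_const 2).aestronglyMeasurable
              (ae_of_all _ fun x => by
                rw [Real.norm_eq_abs, abs_of_nonneg (sq_nonneg _)]
                exact sq_le_sq' (abs_le.mp (hgKbdd x)).1 (abs_le.mp (hgKbdd x)).2)
          · exact fun x => sq_le_sq' (abs_le.mp (hgKbdd x)).1 (abs_le.mp (hgKbdd x)).2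
      _ = K ^ 2 := by simp
  have hXind : iIndepFun X P₂ :=
    hZind.comp (fun _ => gK) (fun _ => hgKm)
  have hvarS : variance S P₂ ≤ N * K ^ 2 := by
    rw [hSdef, IndepFun.variance_sum (fun i _ => hX2 i)
      (fun i _ j _ hij => hXind.indepFun hij)]
    calc (∑ i ∈ Finset.range N, variance (X i) P₂) ≤ ∑ _i ∈ Finset.range N, K ^ 2 :=
          Finset.sum_le_sum (fun i _ => hvarX i)
      _ = N * K ^ 2 := by simp [mul_comm]
  -- Chebyshev
  have hc3 : (0:ℝ) < N * ε / 3 := by positivity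
  have hcheb := meas_ge_le_variance_div_sq (μ := P₂) hS2 hc3
  have hcheb' : P₂ {ω₂ | N * ε / 3 ≤ |S ω₂ - ∫ a, S a ∂P₂|}
      ≤ ENNReal.ofReal (9 * K ^ 2 / (N * ε ^ 2)) := by
    refine hcheb.trans (ENNReal.ofReal_le_ofReal ?_)
    rw [div_le_div_iff₀ (by positivity) (by positivity)]
    nlinarith [hvarS, sq_nonneg ε, sq_nonneg K, hNpos, hε]
  -- Markov
  set R : Ω₂ → ℝ := fun ω₂ => ∑ i ∈ Finset.range N, r (Z i ω₂) with hRdef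
  have hRnn : ∀ ω₂, 0 ≤ R ω₂ := fun ω₂ => Finset.sum_nonneg fun i _ => hr0 _
  have hIrc : ∀ i, Integrable (fun ω₂ => r (Z i ω₂)) P₂ := by
    intro i
    have : Integrable r (P₂.map (Z i)) := by rw [hZlaw i]; exact hIr
    exact (integrable_map_measure hrm.aestronglyMeasurable (hZm i).aemeasurable).mp this
  have hRint : Integrable R P₂ := integrable_finset_sum _ (fun i _ => hIrc i)
  have hER : ∫ ω₂, R ω₂ ∂P₂ = N * ∫ x, r x ∂μ := by
    rw [hRdef]
    rw [integral_finset_sum _ (fun i _ => hIrc i)]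
    have : ∀ i, (∫ ω₂, r (Z i ω₂) ∂P₂) = ∫ x, r x ∂μ := by
      intro i
      rw [← hZlaw i]
      exact (integral_map (hZm i).aemeasurable hrm.aestronglyMeasurable).symm
    simp only [this, Finset.sum_const, Finset.card_range, nsmul_eq_mul]
  have hmark : P₂ {ω₂ | N * ε / 3 < R ω₂}
      ≤ ENNReal.ofReal ((3 / ε) * ∫ x, r x ∂μ) := by
    have hlin : (∫⁻ ω₂, ENNReal.ofReal (R ω₂) ∂P₂) = ENNReal.ofReal (∫ ω₂, R ω₂ ∂P₂) :=
      (ofReal_integral_eq_lintegral_ofReal hRint (ae_of_all _ hRnn)).symm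
    have haem : AEMeasurable (fun ω₂ => ENNReal.ofReal (R ω₂)) P₂ :=
      (ENNReal.measurable_ofReal.comp
        (Finset.measurable_sum _ (fun i _ => hrm.comp (hZm i)))).aemeasurable
    have hmark0 := meas_ge_le_lintegral_div haem (ε := ENNReal.ofReal (N * ε / 3))
      (by simp [hc3]) ENNReal.ofReal_ne_top
    have hsub : {ω₂ | N * ε / 3 < R ω₂} ⊆ {ω₂ | ENNReal.ofReal (N * ε / 3) ≤ ENNReal.ofReal (R ω₂)} :=
      fun ω₂ h => ENNReal.ofReal_le_ofReal (le_of_lt h)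
    have hrint_nn : 0 ≤ ∫ x, r x ∂μ := integral_nonneg hr0
    refine (measure_mono hsub).trans (hmark0.trans ?_)
    rw [hlin, hER]
    refine ENNReal.div_le_of_le_mul ?_
    rw [← ENNReal.ofReal_mul (mul_nonneg (by positivity) hrint_nn)]
    refine ENNReal.ofReal_le_ofReal (le_of_eq ?_)
    field_simp
  -- a.e. domination pulled back
  have hae_all : ∀ᵐ ω₂ ∂P₂, ∀ i, |g (Z i ω₂)| ≤ H (Z i ω₂) := by
    rw [ae_all_iff]
    intro i
    have hs : MeasurableSet {x | |g x| ≤ H x} := measurableSet_le hgm.abs hHm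
    have h := hg
    rw [← hZlaw i] at h
    exact (ae_map_iff (hZm i).aemeasurable hs).mp h
  -- event inclusion
  have hsub : ∀ᵐ ω₂ ∂P₂,
      ω₂ ∈ {ω₂ | ε < |(N : ℝ)⁻¹ * ∑ i ∈ Finset.range N, g (Z i ω₂) - ∫ x, g x ∂μ|} →
      ω₂ ∈ {ω₂ | N * ε / 3 ≤ |S ω₂ - ∫ a, S a ∂P₂|} ∪ {ω₂ | N * ε / 3 < R ω₂} := by
    filter_upwards [hae_all] with ω₂ hω₂ hev
    by_contra hcon
    simp only [Set.mem_union, Set.mem_setOf_eq, not_or, not_le, not_lt] at hcon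
    obtain ⟨h1, h2⟩ := hcon
    replace hev : ε < |(N : ℝ)⁻¹ * ∑ i ∈ Finset.range N, g (Z i ω₂) - ∫ x, g x ∂μ| := hev
    set A := ∑ i ∈ Finset.range N, g (Z i ω₂) with hA
    have hAB : |A - S ω₂| ≤ R ω₂ := by
      rw [hSapp, hRdef, hA, ← Finset.sum_sub_distrib]
      refine (Finset.abs_sum_le_sum_abs _ _).trans (Finset.sum_le_sum fun i _ => ?_)
      exact hdiff _ (hω₂ i)
    have hev' : N * ε < |A - N * ∫ x, g x ∂μ| := by
      have h0 : (N : ℝ)⁻¹ * A - ∫ x, g x ∂μ = (N : ℝ)⁻¹ * (A - N * ∫ x, g x ∂μ) := by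
        field_simp
      rw [h0, abs_mul, abs_inv, abs_of_pos hNpos] at hev
      calc N * ε < N * ((N:ℝ)⁻¹ * |A - N * ∫ x, g x ∂μ|) := by
            exact (mul_lt_mul_iff_right₀ hNpos).mpr hev
        _ = |A - N * ∫ x, g x ∂μ| := by field_simp
    have hmK : |(N:ℝ) * (∫ x, gK x ∂μ) - N * ∫ x, g x ∂μ| ≤ N * ε / 3 := by
      rw [← mul_sub, abs_mul, abs_of_pos hNpos]
      calc (N:ℝ) * |(∫ x, gK x ∂μ) - ∫ x, g x ∂μ|
          ≤ N * (ε / 3) := by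
            refine mul_le_mul_of_nonneg_left ?_ hNpos.le
            rw [abs_sub_comm]
            exact hint_diff.trans hrsmall
        _ = N * ε / 3 := by ring
    have : |A - N * ∫ x, g x ∂μ| ≤ |A - S ω₂| + |S ω₂ - ∫ a, S a ∂P₂|
        + |(∫ a, S a ∂P₂) - N * ∫ x, g x ∂μ| := by
      calc |A - N * ∫ x, g x ∂μ|
          = |(A - S ω₂) + (S ω₂ - ∫ a, S a ∂P₂) + ((∫ a, S a ∂P₂) - N * ∫ x, g x ∂μ)| := by
            ring_nf
        _ ≤ _ := by
            exact (abs_add_le _ _).trans (add_le_add_left (abs_add_le _ _) _)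
    rw [hES] at this h1
    nlinarith [hAB, h1, h2, hmK, hev', this]
  calc P₂ {ω₂ | ε < |(N : ℝ)⁻¹ * ∑ i ∈ Finset.range N, g (Z i ω₂) - ∫ x, g x ∂μ|}
      ≤ P₂ ({ω₂ | N * ε / 3 ≤ |S ω₂ - ∫ a, S a ∂P₂|} ∪ {ω₂ | N * ε / 3 < R ω₂}) :=
        measure_mono_ae hsub
    _ ≤ P₂ {ω₂ | N * ε / 3 ≤ |S ω₂ - ∫ a, S a ∂P₂|} + P₂ {ω₂ | N * ε / 3 < R ω₂} :=
        measure_union_le _ _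
    _ ≤ _ := add_le_add hcheb' hmark

lemma main_aux (P₁ : Measure Ω₁) [IsProbabilityMeasure P₁]
    (P₂ : Measure Ω₂) [IsProbabilityMeasure P₂]
    (μ : Measure E) [IsProbabilityMeasure μ]
    (Z : ℕ → Ω₂ → E) (hZm : ∀ i, Measurable (Z i))
    (hZind : iIndepFun Z P₂)
    (hZlaw : ∀ i, P₂.map (Z i) = μ)
    (h : ℕ → Ω₁ → E → ℝ) (hhm : ∀ N, Measurable (Function.uncurry (h N)))
    (henv : ∀ η : ℝ, 0 < η → ∃ H : E → ℝ, Measurable H ∧ (∀ x, 0 ≤ H x) ∧ Integrable H μ ∧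
      ∀ᶠ N in atTop, ENNReal.ofReal (1 - η) ≤ P₁ {ω₁ | ∀ᵐ x ∂μ, |h N ω₁ x| ≤ H x})
    {ε : ℝ} (hε : 0 < ε) :
    Tendsto (fun (N : ℕ) => (P₁.prod P₂)
      {ω | ε < |(N : ℝ)⁻¹ * ∑ i ∈ Finset.range N, h N ω.1 (Z i ω.2) - ∫ x, h N ω.1 x ∂μ|})
      atTop (nhds 0) := by
  rw [ENNReal.tendsto_atTop_zero]
  intro δ hδ
  obtain ⟨δ', hδ'0, hδ'1, hδ'le⟩ : ∃ δ' : ℝ, 0 < δ' ∧ δ' < 1 ∧ ENNReal.ofReal δ' ≤ δ := by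
    rcases eq_or_ne δ ⊤ with hT | hT
    · exact ⟨1/2, by norm_num, by norm_num, by simp [hT]⟩
    · have hδr : 0 < δ.toReal := ENNReal.toReal_pos hδ.ne' hT
      refine ⟨min (1/2) (δ.toReal / 2), by positivity, ?_, ?_⟩
      · exact (min_le_left _ _).trans_lt (by norm_num)
      · calc ENNReal.ofReal (min (1/2) (δ.toReal / 2))
            ≤ ENNReal.ofReal δ.toReal :=
              ENNReal.ofReal_le_ofReal ((min_le_right _ _).trans (by linarith))
          _ = δ := ENNReal.ofReal_toReal hT
  obtain ⟨H, hHm, hH0, hHint, hHev⟩ := henv (δ' / 3) (by positivity)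
  -- choose the truncation level K
  obtain ⟨K, hK0, hKs⟩ : ∃ K : ℝ, 0 ≤ K ∧
      (∫ x, max (H x - K) 0 ∂μ) ≤ min (ε / 3) (ε * δ' / 9) := by
    have htend : Tendsto (fun n : ℕ => ∫ x, max (H x - n) 0 ∂μ) atTop (nhds 0) := by
      have key := tendsto_integral_of_dominated_convergence (μ := μ)
        (F := fun (n : ℕ) x => max (H x - n) 0) (f := fun _ => (0:ℝ)) (bound := H)
        (fun n => ((hHm.sub measurable_const).max measurable_const).aestronglyMeasurable)
        hHint ?_ ?_
      · simpa using key
      · intro n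
        refine ae_of_all _ fun x => ?_
        rw [Real.norm_eq_abs, abs_of_nonneg (le_max_right _ _)]
        exact max_le (by linarith [hH0 x, Nat.cast_nonneg (α := ℝ) n]) (hH0 x)
      · refine ae_of_all _ fun x => ?_
        have hev : ∀ᶠ n : ℕ in atTop, max (H x - n) 0 = 0 := by
          filter_upwards [eventually_ge_atTop ⌈H x⌉₊] with n hn
          have : H x ≤ n := (Nat.le_ceil _).trans (by exact_mod_cast hn)
          exact max_eq_right (by linarith)
        exact Tendsto.congr' (hev.mono fun n hn => hn.symm) tendsto_const_nhds
    have := htend.eventually_lt_const (by positivity : (0:ℝ) < min (ε / 3) (ε * δ' / 9))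
    obtain ⟨n, hn⟩ := this.exists
    exact ⟨n, Nat.cast_nonneg n, hn.le⟩
  have hrε : (∫ x, max (H x - K) 0 ∂μ) ≤ ε / 3 := hKs.trans (min_le_left _ _)
  have hrδ : (∫ x, max (H x - K) 0 ∂μ) ≤ ε * δ' / 9 := hKs.trans (min_le_right _ _)
  have hrnn : 0 ≤ ∫ x, max (H x - K) 0 ∂μ := integral_nonneg fun x => le_max_right _ _
  set N₁ : ℕ := ⌈27 * K ^ 2 / (ε ^ 2 * δ')⌉₊ with hN₁
  have hbig : ∀ᶠ N : ℕ in atTop,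
      ENNReal.ofReal (1 - δ' / 3) ≤ P₁ {ω₁ | ∀ᵐ x ∂μ, |h N ω₁ x| ≤ H x} ∧ 1 ≤ N ∧ N₁ ≤ N := by
    filter_upwards [hHev, eventually_ge_atTop 1, eventually_ge_atTop N₁] with N h1 h2 h3
    exact ⟨h1, h2, h3⟩
  rw [eventually_atTop] at hbig
  obtain ⟨M, hM⟩ := hbig
  refine ⟨M, fun N hNM => ?_⟩
  obtain ⟨hNenv, hN1, hNN1⟩ := hM N hNM
  have hNpos : (0:ℝ) < N := by exact_mod_cast hN1
  -- measurability of the deviation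
  have hFm : Measurable (fun ω : Ω₁ × Ω₂ =>
      (N:ℝ)⁻¹ * ∑ i ∈ Finset.range N, h N ω.1 (Z i ω.2) - ∫ x, h N ω.1 x ∂μ) := by
    apply Measurable.sub
    · exact measurable_const.mul (Finset.measurable_sum _ (fun i _ =>
        (hhm N).comp (measurable_fst.prodMk ((hZm i).comp measurable_snd))))
    · have hsm : StronglyMeasurable (fun ω₁ => ∫ x, h N ω₁ x ∂μ) :=
        (hhm N).stronglyMeasurable.integral_prod_right'
      exact hsm.measurable.comp measurable_fst
  set A : Set (Ω₁ × Ω₂) := {ω | ε <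
      |(N : ℝ)⁻¹ * ∑ i ∈ Finset.range N, h N ω.1 (Z i ω.2) - ∫ x, h N ω.1 x ∂μ|} with hA
  have hAm : MeasurableSet A := measurableSet_lt measurable_const hFm.abs
  set φ : Ω₁ → ℝ≥0∞ := fun ω₁ => P₂ (Prod.mk ω₁ ⁻¹' A) with hφ
  have hφm : Measurable φ := measurable_measure_prodMk_left hAm
  have hφ1 : ∀ ω₁, φ ω₁ ≤ 1 := fun ω₁ => prob_le_one
  set B' : ℝ≥0∞ := ENNReal.ofReal (δ' / 3) + ENNReal.ofReal (δ' / 3) with hB'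
  -- slice bound on the good event
  have hslice : ∀ ω₁, (∀ᵐ x ∂μ, |h N ω₁ x| ≤ H x) → φ ω₁ ≤ B' := by
    intro ω₁ hdom
    have hNbound : 9 * K ^ 2 / (N * ε ^ 2) ≤ δ' / 3 := by
      have hle : 27 * K ^ 2 / (ε ^ 2 * δ') ≤ (N:ℝ) := by
        refine le_trans (Nat.le_ceil _) ?_
        exact_mod_cast hNN1
      rw [div_le_div_iff₀ (by positivity) (by norm_num)]
      rw [div_le_iff₀ (by positivity)] at hle
      nlinarith [sq_nonneg ε, sq_nonneg K]
    have hb := slice_bound μ P₂ Z hZm hZind hZlaw hHm hH0 hHint hK0 hε hrε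
      ((hhm N).of_uncurry_left) hdom (Nat.lt_of_lt_of_le Nat.zero_lt_one hN1)
    refine le_trans (le_of_eq ?_) (hb.trans (add_le_add (ENNReal.ofReal_le_ofReal hNbound)
      (ENNReal.ofReal_le_ofReal ?_)))
    · rfl
    · calc (3 / ε) * ∫ x, max (H x - K) 0 ∂μ ≤ (3 / ε) * (ε * δ' / 9) := by
            exact mul_le_mul_of_nonneg_left hrδ (by positivity)
        _ = δ' / 3 := by field_simp; ring
  set T : Set Ω₁ := {ω₁ | φ ω₁ ≤ B'} with hT
  have hTm : MeasurableSet T := measurableSet_le hφm measurable_const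
  have hST : {ω₁ | ∀ᵐ x ∂μ, |h N ω₁ x| ≤ H x} ⊆ T := fun ω₁ hω₁ => hslice ω₁ hω₁
  have hPT : ENNReal.ofReal (1 - δ' / 3) ≤ P₁ T := le_trans hNenv (measure_mono hST)
  have hTc : P₁ Tᶜ ≤ ENNReal.ofReal (δ' / 3) := by
    rw [measure_compl hTm (measure_ne_top _ _), measure_univ]
    calc (1:ℝ≥0∞) - P₁ T ≤ 1 - ENNReal.ofReal (1 - δ' / 3) := tsub_le_tsub_left hPT _
      _ = ENNReal.ofReal (δ' / 3) := by
          rw [← ENNReal.ofReal_one, ← ENNReal.ofReal_sub _ (by linarith)]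
          norm_num
  calc (P₁.prod P₂) A = ∫⁻ ω₁, φ ω₁ ∂P₁ := Measure.prod_apply hAm
    _ = (∫⁻ ω₁ in T, φ ω₁ ∂P₁) + ∫⁻ ω₁ in Tᶜ, φ ω₁ ∂P₁ := (lintegral_add_compl _ hTm).symm
    _ ≤ B' * P₁ T + 1 * P₁ Tᶜ := by
        refine add_le_add ?_ ?_
        · exact le_trans (setLIntegral_mono measurable_const (fun ω₁ hω₁ => hω₁))
            (le_of_eq (setLIntegral_const _ _))
        · exact le_trans (setLIntegral_mono measurable_const (fun ω₁ _ => hφ1 ω₁))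
            (le_of_eq (setLIntegral_const _ _))
    _ ≤ B' * 1 + 1 * ENNReal.ofReal (δ' / 3) := by
        exact add_le_add (mul_le_mul_right prob_le_one _) (mul_le_mul_right hTc _)
    _ = ENNReal.ofReal (δ' / 3) + ENNReal.ofReal (δ' / 3) + ENNReal.ofReal (δ' / 3) := by
        rw [mul_one, one_mul, hB']
    _ = ENNReal.ofReal δ' := by
        rw [← ENNReal.ofReal_add (by positivity) (by positivity),
          ← ENNReal.ofReal_add (by positivity) (by positivity)]
        congr 1
        ring
    _ ≤ δ := hδ'le

end Aux

/-- hold-out law of large numbers for a random function `f_N`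
independent of the i.i.d. evaluation sample (independence encoded by placing
the random function and the sample on the two factors of a product probability
space). Both the centered empirical mean of `f_N` and of `f_N²` converge to
zero in probability. -/

theorem stmt14 (d : ℕ) {Ω₁ Ω₂ : Type} [MeasurableSpace Ω₁] [MeasurableSpace Ω₂]
    (P₁ : Measure Ω₁) (P₂ : Measure Ω₂) [IsProbabilityMeasure P₁] [IsProbabilityMeasure P₂]
    (μ : Measure (EuclideanSpace ℝ (Fin d))) [IsProbabilityMeasure μ]
    (Z : ℕ → Ω₂ → EuclideanSpace ℝ (Fin d)) (hZm : ∀ i, Measurable (Z i))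
    (hZind : iIndepFun Z P₂)
    (hZlaw : ∀ i, P₂.map (Z i) = μ)
    (fN : ℕ → Ω₁ → EuclideanSpace ℝ (Fin d) → ℝ)
    (hfNm : ∀ N, Measurable (Function.uncurry (fN N)))
    (f : EuclideanSpace ℝ (Fin d) → ℝ) (hf : MemLp f 2 μ)
    (hL2conv : ∀ ε : ℝ, 0 < ε →
      Tendsto (fun N => P₁ {ω₁ | ε < ∫ x, (fN N ω₁ x - f x) ^ 2 ∂μ}) atTop (nhds 0))
    (henv : ∀ η : ℝ, 0 < η → ∃ L : ℝ, ∃ G : EuclideanSpace ℝ (Fin d) → ℝ,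
      Integrable (fun x => G x ^ 2) μ ∧
      ∀ᶠ N in atTop,
        ENNReal.ofReal (1 - η) ≤ P₁ {ω₁ | ∀ x, |fN N ω₁ x| ≤ L * G x}) :
    (∀ ε : ℝ, 0 < ε →
      Tendsto (fun (N : ℕ) => (P₁.prod P₂)
        {ω | ε < |(N : ℝ)⁻¹ * ∑ i ∈ Finset.range N, fN N ω.1 (Z i ω.2)
              - ∫ x, fN N ω.1 x ∂μ|}) atTop (nhds 0)) ∧
    (∀ ε : ℝ, 0 < ε →
      Tendsto (fun (N : ℕ) => (P₁.prod P₂)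
        {ω | ε < |(N : ℝ)⁻¹ * ∑ i ∈ Finset.range N, fN N ω.1 (Z i ω.2) ^ 2
              - ∫ x, fN N ω.1 x ^ 2 ∂μ|}) atTop (nhds 0)) := by
  constructor
  · intro ε hε
    refine main_aux P₁ P₂ μ Z hZm hZind hZlaw fN hfNm ?_ hε
    intro η hη
    obtain ⟨L, G, hGint, hev⟩ := henv η hη
    set H₀ : EuclideanSpace ℝ (Fin d) → ℝ := fun x => |L| * Real.sqrt (G x ^ 2) with hH₀
    have hH₀aesm : AEStronglyMeasurable H₀ μ :=
      (continuous_const.mul Real.continuous_sqrt).comp_aestronglyMeasurable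
        hGint.aestronglyMeasurable
    have hH₀nn : ∀ x, 0 ≤ H₀ x := fun x =>
      mul_nonneg (abs_nonneg L) (Real.sqrt_nonneg _)
    have hH₀sq : (fun x => H₀ x ^ 2) = fun x => L ^ 2 * G x ^ 2 := by
      funext x
      have hs : Real.sqrt (G x ^ 2) ^ 2 = G x ^ 2 := Real.sq_sqrt (sq_nonneg _)
      simp only [hH₀, mul_pow, hs, sq_abs]
    have hH₀mem : MemLp H₀ 2 μ := (memLp_two_iff_integrable_sq hH₀aesm).mpr
      (by rw [hH₀sq]; exact hGint.const_mul _)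
    have hH₀int : Integrable H₀ μ := hH₀mem.integrable one_le_two
    set H1 := hH₀aesm.mk H₀ with hH1
    have hH1m : StronglyMeasurable H1 := hH₀aesm.stronglyMeasurable_mk
    have heq : H₀ =ᵐ[μ] H1 := hH₀aesm.ae_eq_mk
    refine ⟨fun x => max (H1 x) 0, hH1m.measurable.max measurable_const,
      fun x => le_max_right _ _, ?_, ?_⟩
    · refine hH₀int.congr (heq.mono fun x hx => ?_)
      show H₀ x = max (H1 x) 0
      rw [← hx, max_eq_left (hH₀nn x)]
    · filter_upwards [hev] with N hN
      refine le_trans hN (measure_mono ?_)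
      intro ω₁ hω₁
      filter_upwards [heq] with x hx
      have h1 : |fN N ω₁ x| ≤ H₀ x := by
        refine (hω₁ x).trans ?_
        calc L * G x ≤ |L * G x| := le_abs_self _
          _ = |L| * |G x| := abs_mul _ _
          _ = H₀ x := by
            have hss : Real.sqrt (G x ^ 2) = |G x| := Real.sqrt_sq_eq_abs _
            simp only [hH₀, hss]
      exact h1.trans (by rw [← hx]; exact le_max_left _ _)
  · intro ε hε
    have hsqm : ∀ N, Measurable (Function.uncurry (fun ω₁ x => fN N ω₁ x ^ 2)) := by
      intro N
      have hid : Function.uncurry (fun (ω₁ : Ω₁) (x : EuclideanSpace ℝ (Fin d)) =>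
          fN N ω₁ x ^ 2) = fun p => (Function.uncurry (fN N) p) ^ 2 := rfl
      rw [hid]
      exact (hfNm N).pow_const 2
    refine main_aux P₁ P₂ μ Z hZm hZind hZlaw (fun N ω₁ x => fN N ω₁ x ^ 2) hsqm ?_ hε
    intro η hη
    obtain ⟨L, G, hGint, hev⟩ := henv η hη
    set H₀ : EuclideanSpace ℝ (Fin d) → ℝ := fun x => L ^ 2 * G x ^ 2 with hH₀
    have hH₀aesm : AEStronglyMeasurable H₀ μ := hGint.aestronglyMeasurable.const_mul _
    have hH₀nn : ∀ x, 0 ≤ H₀ x := fun x => by positivity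
    have hH₀int : Integrable H₀ μ := hGint.const_mul _
    set H1 := hH₀aesm.mk H₀ with hH1
    have hH1m : StronglyMeasurable H1 := hH₀aesm.stronglyMeasurable_mk
    have heq : H₀ =ᵐ[μ] H1 := hH₀aesm.ae_eq_mk
    refine ⟨fun x => max (H1 x) 0, hH1m.measurable.max measurable_const,
      fun x => le_max_right _ _, ?_, ?_⟩
    · refine hH₀int.congr (heq.mono fun x hx => ?_)
      show H₀ x = max (H1 x) 0
      rw [← hx, max_eq_left (hH₀nn x)]
    · filter_upwards [hev] with N hN
      refine le_trans hN (measure_mono ?_)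
      intro ω₁ hω₁
      filter_upwards [heq] with x hx
      have h1 : |fN N ω₁ x ^ 2| ≤ H₀ x := by
        rw [abs_of_nonneg (sq_nonneg _), hH₀]
        have hb := abs_le.mp (hω₁ x)
        calc fN N ω₁ x ^ 2 ≤ (L * G x) ^ 2 := sq_le_sq' hb.1 hb.2
          _ = L ^ 2 * G x ^ 2 := by ring
      exact h1.trans (by rw [← hx]; exact le_max_left _ _)
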